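/- If Q has the shrinking property and is Lipschitz equicontinuous, then for every nonempty compact set E ⊆ K and every ε > 0 there is an integer N such that for every u ∈ Lip₁[K] and every n ≥ N, sup_{x,y ∈ E} |∫ u dQⁿ(x,·) − ∫ u dQⁿ(y,·)| ≤ ε. -/

import Mathlib

open MeasureTheory ProbabilityTheory Filter Topology

/-- The oscillation of `u` over a set `E`: `sup {u x - u y : x, y ∈ E}`. -/
noncomputable def oscOn {K : Type*} (u : K → ℝ) (E : Set K) : ℝ :=
  sSup {d : ℝ | ∃ x ∈ E, ∃ y ∈ E, d = u x - u y}

/-- The oscillation of `u` over the whole space. -/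
noncomputable def osc {K : Type*} (u : K → ℝ) : ℝ :=
  oscOn u Set.univ

/-- The (smallest) Lipschitz constant `γ(u)` of `u`. -/
noncomputable def lipConst {K : Type*} [MetricSpace K] (u : K → ℝ) : ℝ :=
  sInf {c : ℝ | 0 ≤ c ∧ ∀ x y, |u x - u y| ≤ c * dist x y}

/-- `u ∈ Lip[K]`: `u` is bounded and Lipschitz continuous. -/
def MemLip {K : Type*} [MetricSpace K] (u : K → ℝ) : Prop :=
  (∃ C : ℝ, ∀ x, |u x| ≤ C) ∧ (∃ c : ℝ, 0 ≤ c ∧ ∀ x y, |u x - u y| ≤ c * dist x y)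

/-- `u ∈ Lip₁[K]`: `u` is bounded and Lipschitz with constant at most `1`. -/
def MemLip1 {K : Type*} [MetricSpace K] (u : K → ℝ) : Prop :=
  (∃ C : ℝ, ∀ x, |u x| ≤ C) ∧ ∀ x y, |u x - u y| ≤ dist x y

/-- Iterates of a Markov kernel: `kiter Q 0 = id`, `kiter Q (n+1) = Q ∘ₖ kiter Q n`, so that
`kiter Q n x = Qⁿ(x, ·)`. -/
noncomputable def kiter {K : Type*} [MeasurableSpace K] (Q : Kernel K K) : ℕ → Kernel K K
  | 0 => Kernel.id
  | n + 1 => Q ∘ₖ kiter Q n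

/-- The `n`-step transition operator `Tⁿu(x) = ∫_K u(y) Qⁿ(x, dy)`. -/
noncomputable def Tn {K : Type*} [MeasurableSpace K] (Q : Kernel K K) (n : ℕ)
    (u : K → ℝ) (x : K) : ℝ :=
  ∫ y, u y ∂(kiter Q n x)

/-- `Q` is Lipschitz equicontinuous: there is `C > 0` with `γ(Tⁿu) ≤ C γ(u)` for
all `n ≥ 1` and all bounded Lipschitz `u`. -/
def LipEquicont {K : Type*} [MetricSpace K] [MeasurableSpace K] (Q : Kernel K K) : Prop :=
  ∃ C : ℝ, 0 < C ∧ ∀ n : ℕ, 1 ≤ n → ∀ u : K → ℝ, MemLip u →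
    lipConst (Tn Q n u) ≤ C * lipConst u

/-- `Q` has the shrinking property. -/
def ShrinkingProperty {K : Type*} [MetricSpace K] [MeasurableSpace K] (Q : Kernel K K) : Prop :=
  ∀ ρ : ℝ, 0 < ρ → ∃ α : ℝ, 0 < α ∧ α < 1 ∧
    ∀ E : Set K, E.Nonempty → IsCompact E → ∀ η : ℝ, 0 < η → ∀ κ : ℝ, 0 < κ →
      ∃ N : ℕ, ∃ F : Set K, F.Nonempty ∧ IsCompact F ∧
        ∀ n : ℕ, N ≤ n → ∀ u : K → ℝ, MemLip u →
          oscOn (Tn Q n u) E ≤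
            η * lipConst u + κ * osc u + α * ρ * lipConst u
              + (1 - α) * oscOn (Tn Q (n - N) u) F

/-- `Q` has the strong shrinking property. -/
def StrongShrinkingProperty {K : Type*} [MetricSpace K] [MeasurableSpace K]
    (Q : Kernel K K) : Prop :=
  ∀ ρ : ℝ, 0 < ρ → ∃ α : ℝ, 0 < α ∧ α < 1 ∧ ∃ N : ℕ,
    ∀ n : ℕ, N ≤ n → ∀ u : K → ℝ, MemLip u →
      osc (Tn Q n u) ≤ α * ρ * lipConst u + (1 - α) * osc (Tn Q (n - N) u)

/-- `Q` is weakly contracting: for all `x, y`,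
`sup {∫ u dQⁿ(x,·) − ∫ u dQⁿ(y,·) : u ∈ Lip₁[K]} → 0`. -/
def WeaklyContracting {K : Type*} [MetricSpace K] [MeasurableSpace K] (Q : Kernel K K) : Prop :=
  ∀ x y : K,
    Filter.Tendsto
      (fun n : ℕ => sSup {d : ℝ | ∃ u : K → ℝ, MemLip1 u ∧ d = Tn Q n u x - Tn Q n u y})
      Filter.atTop (nhds 0)

/-- `Q` is weakly ergodic: weakly contracting, and there is a probability measure `π` with
`∫ u dQⁿ(x,·) → ∫ u dπ` for every bounded continuous `u` and every `x`. -/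
def WeaklyErgodic {K : Type*} [MetricSpace K] [MeasurableSpace K] (Q : Kernel K K) : Prop :=
  WeaklyContracting Q ∧
    ∃ π : Measure K, IsProbabilityMeasure π ∧
      ∀ u : K → ℝ, Continuous u → (∃ C : ℝ, ∀ x, |u x| ≤ C) →
        ∀ x : K, Filter.Tendsto (fun n : ℕ => Tn Q n u x) Filter.atTop (nhds (∫ y, u y ∂π))

set_option linter.unusedSectionVars false

section Helpers
variable {K : Type*} [MetricSpace K] [MeasurableSpace K] [BorelSpace K]

lemma MemLip1.memLip {u : K → ℝ} (h : MemLip1 u) : MemLip u :=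
  ⟨h.1, 1, zero_le_one, by simpa using h.2⟩

lemma lipConst_le_one {u : K → ℝ} (h : MemLip1 u) : lipConst u ≤ 1 :=
  csInf_le ⟨0, fun _ hc => hc.1⟩ ⟨zero_le_one, by simpa using h.2⟩

lemma lipConst_nonneg (u : K → ℝ) : 0 ≤ lipConst u :=
  Real.sInf_nonneg (fun _ hc => hc.1)

instance kiter_markov (Q : Kernel K K) [IsMarkovKernel Q] :
    ∀ n, IsMarkovKernel (kiter Q n)
  | 0 => by unfold kiter; infer_instance
  | n + 1 => by have := kiter_markov Q n; unfold kiter; infer_instance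

lemma MemLip1.continuous {u : K → ℝ} (h : MemLip1 u) : Continuous u := by
  refine (LipschitzWith.of_dist_le_mul (K := 1) (f := u) ?_).continuous
  intro x y
  simpa [Real.dist_eq] using h.2 x y

lemma MemLip1.integrable {u : K → ℝ} (h : MemLip1 u) (μ : Measure K)
    [IsProbabilityMeasure μ] : Integrable u μ := by
  obtain ⟨C, hC⟩ := h.1
  exact Integrable.mono' (integrable_const C) h.continuous.aestronglyMeasurable
    (ae_of_all _ fun x => by simpa using hC x)

/-- uniform bound on differences of `Tn` for Lip₁ functions -/
lemma tn_diff_le (Q : Kernel K K) [IsMarkovKernel Q] {D : ℝ}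
    (hdist : ∀ x y : K, dist x y ≤ D) {u : K → ℝ} (h : MemLip1 u)
    (m : ℕ) (x y : K) : Tn Q m u x - Tn Q m u y ≤ 2 * D := by
  have h1 : Tn Q m u x ≤ u x + D := by
    have : ∫ z, u z ∂(kiter Q m x) ≤ ∫ _, u x + D ∂(kiter Q m x) := by
      refine integral_mono (h.integrable _) (integrable_const _) fun z => ?_
      have := (abs_le.mp (h.2 z x)).2
      have := hdist z x
      linarith
    simpa [Tn] using this
  have h2 : u x - D ≤ Tn Q m u y := by
    have : ∫ _, u x - D ∂(kiter Q m y) ≤ ∫ z, u z ∂(kiter Q m y) := by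
      refine integral_mono (integrable_const _) (h.integrable _) fun z => ?_
      have := (abs_le.mp (h.2 x z)).2
      have := hdist x z
      linarith
    simpa [Tn] using this
  linarith

lemma oscOn_le {u : K → ℝ} {E : Set K} (hE : E.Nonempty) {M : ℝ}
    (h : ∀ x ∈ E, ∀ y ∈ E, u x - u y ≤ M) : oscOn u E ≤ M := by
  obtain ⟨x₀, hx₀⟩ := hE
  refine csSup_le ⟨u x₀ - u x₀, x₀, hx₀, x₀, hx₀, rfl⟩ ?_
  rintro d ⟨x, hx, y, hy, rfl⟩
  exact h x hx y hy

lemma le_oscOn {u : K → ℝ} {E : Set K} {M : ℝ}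
    (h : ∀ x ∈ E, ∀ y ∈ E, u x - u y ≤ M) {x y : K} (hx : x ∈ E) (hy : y ∈ E) :
    u x - u y ≤ oscOn u E :=
  le_csSup ⟨M, by rintro d ⟨a, ha, b, hb, rfl⟩; exact h a ha b hb⟩ ⟨x, hx, y, hy, rfl⟩

end Helpers

/-- If `Q` has the shrinking property and is Lipschitz equicontinuous, then for
every nonempty compact `E` and every `ε > 0` there is `N` such that for every `u ∈ Lip₁[K]` and
all `n ≥ N`, `sup_{x,y ∈ E} |∫ u dQⁿ(x,·) − ∫ u dQⁿ(y,·)| ≤ ε`. -/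
theorem stmt_5 {K : Type*} [MetricSpace K] [CompleteSpace K]
    [TopologicalSpace.SeparableSpace K] [MeasurableSpace K] [BorelSpace K]
    (hbdd : Bornology.IsBounded (Set.univ : Set K))
    (Q : Kernel K K) [IsMarkovKernel Q]
    (hshrink : ShrinkingProperty Q) (hlip : LipEquicont Q) :
    ∀ E : Set K, E.Nonempty → IsCompact E → ∀ ε : ℝ, 0 < ε →
      ∃ N : ℕ, ∀ u : K → ℝ, MemLip1 u → ∀ n : ℕ, N ≤ n →
        ∀ x ∈ E, ∀ y ∈ E, |Tn Q n u x - Tn Q n u y| ≤ ε := by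
  intro E hEne hEcomp ε hε
  -- a bound on distances
  obtain ⟨D, hD⟩ := Metric.isBounded_iff.mp hbdd
  have hdist : ∀ x y : K, dist x y ≤ D := fun x y =>
    hD (Set.mem_univ x) (Set.mem_univ y)
  obtain ⟨x₀, hx₀⟩ := hEne
  have hD0 : 0 ≤ D := le_trans (by simp) (hdist x₀ x₀)
  -- set up constants
  set ρ : ℝ := ε / 4 with hρdef
  have hρ : 0 < ρ := by positivity
  obtain ⟨α, hα0, hα1, hαspec⟩ := hshrink ρ hρ
  have h1α0 : 0 ≤ 1 - α := by linarith
  set η : ℝ := α * ε / 8 with hηdef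
  have hη : 0 < η := by positivity
  set κ : ℝ := α * ε / (8 * (D + 1)) with hκdef
  have hκ : 0 < κ := by positivity
  set B : ℝ := η + κ * D + α * ρ with hBdef
  have hB0 : 0 ≤ B := by positivity
  have hBle : B ≤ α * ε / 2 := by
    have : κ * D ≤ α * ε / 8 := by
      rw [hκdef]
      rw [div_mul_eq_mul_div, div_le_div_iff₀ (by positivity) (by norm_num)]
      nlinarith
    rw [hBdef, hηdef, hρdef]; nlinarith
  -- uniform bound on oscillations of Tn of Lip₁ functions
  have hosc : ∀ (F : Set K), F.Nonempty → ∀ (m : ℕ) (u : K → ℝ), MemLip1 u →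
      oscOn (Tn Q m u) F ≤ 2 * D := fun F hF m u hu =>
    oscOn_le hF fun x _ y _ => tn_diff_le Q hdist hu m x y
  -- the key induction
  have key : ∀ k : ℕ, ∃ N : ℕ, ∃ F : Set K, F.Nonempty ∧ IsCompact F ∧
      ∀ n : ℕ, N ≤ n → ∀ u : K → ℝ, MemLip1 u →
        oscOn (Tn Q n u) E ≤ B * ((1 - (1 - α) ^ k) / α)
          + (1 - α) ^ k * oscOn (Tn Q (n - N) u) F := by
    intro k
    induction k with
    | zero =>
      exact ⟨0, E, ⟨x₀, hx₀⟩, hEcomp, fun n _ u _ => by simp⟩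
    | succ k ih =>
      obtain ⟨N, F, hFne, hFc, hind⟩ := ih
      obtain ⟨N', F', hF'ne, hF'c, hind'⟩ := hαspec F hFne hFc η hη κ hκ
      refine ⟨N + N', F', hF'ne, hF'c, fun n hn u hu => ?_⟩
      have hnN : N ≤ n := le_trans (Nat.le_add_right _ _) hn
      have hstep := hind' (n - N) (by omega) u hu.memLip
      rw [Nat.sub_sub] at hstep
      have hlipb : lipConst u ≤ 1 := lipConst_le_one hu
      have hlip0 : 0 ≤ lipConst u := lipConst_nonneg u
      have hoscu : osc u ≤ D :=
        oscOn_le ⟨x₀, Set.mem_univ x₀⟩ fun x _ y _ =>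
          le_trans (le_abs_self _) (le_trans (hu.2 x y) (hdist x y))
      have hstep2 : oscOn (Tn Q (n - N) u) F ≤
          B + (1 - α) * oscOn (Tn Q (n - (N + N')) u) F' := by
        have h1 : η * lipConst u ≤ η := by nlinarith
        have h2 : κ * osc u ≤ κ * D := by nlinarith
        have h3 : α * ρ * lipConst u ≤ α * ρ := by nlinarith [mul_pos hα0 hρ]
        rw [hBdef]; linarith
      calc oscOn (Tn Q n u) E
          ≤ B * ((1 - (1 - α) ^ k) / α) + (1 - α) ^ k * oscOn (Tn Q (n - N) u) F :=
            hind n hnN u hu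
        _ ≤ B * ((1 - (1 - α) ^ k) / α)
            + (1 - α) ^ k * (B + (1 - α) * oscOn (Tn Q (n - (N + N')) u) F') := by
            exact add_le_add le_rfl (mul_le_mul_of_nonneg_left hstep2 (pow_nonneg h1α0 k))
        _ = B * ((1 - (1 - α) ^ (k + 1)) / α)
            + (1 - α) ^ (k + 1) * oscOn (Tn Q (n - (N + N')) u) F' := by
            field_simp
            ring
  -- choose k
  obtain ⟨k, hk⟩ := exists_pow_lt_of_lt_one (x := ε / (2 * (2 * D + 1)))
    (y := 1 - α) (by positivity) (by linarith)
  obtain ⟨N, F, hFne, hFc, hN⟩ := key k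
  refine ⟨N, fun u hu n hn x hx y hy => ?_⟩
  have hboundall : oscOn (Tn Q n u) E ≤ ε := by
    have h1 : B * ((1 - (1 - α) ^ k) / α) ≤ ε / 2 := by
      have hp0 : 0 ≤ (1 - α) ^ k := pow_nonneg h1α0 k
      have : (1 - (1 - α) ^ k) / α ≤ 1 / α := by
        gcongr
        · linarith
      calc B * ((1 - (1 - α) ^ k) / α) ≤ (α * ε / 2) * (1 / α) := by
            apply mul_le_mul hBle this ?_ (by positivity)
            · apply div_nonneg ?_ (le_of_lt hα0)
              have : (1 - α) ^ k ≤ 1 := pow_le_one₀ h1α0 (by linarith)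
              linarith
        _ = ε / 2 := by field_simp
    have h2 : (1 - α) ^ k * oscOn (Tn Q (n - N) u) F ≤ ε / 2 := by
      have hub := hosc F hFne (n - N) u hu
      have hp0 : 0 ≤ (1 - α) ^ k := pow_nonneg h1α0 k
      calc (1 - α) ^ k * oscOn (Tn Q (n - N) u) F ≤ (1 - α) ^ k * (2 * D + 1) := by
            nlinarith
        _ ≤ (ε / (2 * (2 * D + 1))) * (2 * D + 1) := by nlinarith
        _ = ε / 2 := by field_simp
    have := hN n hn u hu
    linarith
  have hdle : ∀ a ∈ E, ∀ b ∈ E, Tn Q n u a - Tn Q n u b ≤ 2 * D :=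
    fun a _ b _ => tn_diff_le Q hdist hu n a b
  rw [abs_le]
  constructor
  · have := le_trans (le_oscOn hdle hy hx) hboundall
    linarith
  · exact le_trans (le_oscOn hdle hx hy) hboundall
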